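/- Let P be a naturally labeled finite poset on [n] and m a positive integer. The number of lattice points in the m-th dilate of the enriched chain polytope, |mE_P ∩ ℤ^n|, equals the number of left enriched P-partitions f : P → {0, ±1, ±2, ..., ±m}, i.e., the value Ω_P^{(ℓ)}(m) of the left enriched order polynomial at m. -/

import Mathlib

/-- `A` is an antichain of the poset `(Fin n, r)`. -/
def IsAntichainIn {n : ℕ} (r : Fin n → Fin n → Prop) (A : Set (Fin n)) : Prop :=
  ∀ i ∈ A, ∀ j ∈ A, i ≠ j → ¬ r i j ∧ ¬ r j i

/-- The set `E(P)` of signed indicator vectors of antichains of `P`. -/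
def signedAntichainVectors {n : ℕ} (r : Fin n → Fin n → Prop) : Set (Fin n → ℝ) :=
  {x | (∀ i, x i = 0 ∨ x i = 1 ∨ x i = -1) ∧ IsAntichainIn r {i | x i ≠ 0}}

/-- The enriched chain polytope `E_P`. -/
def enrichedChainPolytope {n : ℕ} (r : Fin n → Fin n → Prop) : Set (Fin n → ℝ) :=
  convexHull ℝ (signedAntichainVectors r)


open Pointwise in
/-- The number of lattice points in the `m`-th dilate of the enriched chain polytope. -/
noncomputable def eCount {n : ℕ} (r : Fin n → Fin n → Prop) (m : ℕ) : ℕ :=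
  Nat.card {x : Fin n → ℤ // (fun i => (x i : ℝ)) ∈ (m : ℝ) • enrichedChainPolytope r}

/-- `f : P → {0,±1,…,±m}` is a left enriched `P`-partition. -/
def IsLeftEnrichedPartition {n : ℕ} (r : Fin n → Fin n → Prop) (m : ℕ)
    (f : Fin n → ℤ) : Prop :=
  (∀ i, |f i| ≤ (m : ℤ)) ∧
  ∀ i j, r i j → i ≠ j → |f i| ≤ |f j| ∧ (|f i| = |f j| → 0 ≤ f j)

/-- The left enriched order polynomial of `P` evaluated at `m`. -/
noncomputable def leCount {n : ℕ} (r : Fin n → Fin n → Prop) (m : ℕ) : ℕ :=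
  Nat.card {f : Fin n → ℤ // IsLeftEnrichedPartition r m f}


open Finset

section Aux

variable {n : ℕ} (r : Fin n → Fin n → Prop)

/-- `C` is a chain. -/
def IsCh (C : Finset (Fin n)) : Prop := ∀ i ∈ C, ∀ j ∈ C, r i j ∨ r j i

/-- all chain sums of `|x|` are at most `m`. -/
def ChainCond (m : ℕ) (x : Fin n → ℤ) : Prop :=
  ∀ C : Finset (Fin n), IsCh r C → ∑ i ∈ C, |x i| ≤ (m : ℤ)

open scoped Classical in
/-- chains ending at `i`. -/
noncomputable def chainsTo (i : Fin n) : Finset (Finset (Fin n)) :=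
  Finset.univ.powerset.filter (fun C => i ∈ C ∧ (∀ j ∈ C, r j i) ∧ IsCh r C)

/-- maximal chain sum ending at `i`. -/
noncomputable def Fx (x : Fin n → ℤ) (i : Fin n) : ℕ :=
  (chainsTo r i).sup (fun C => ∑ j ∈ C, (x j).natAbs)

open scoped Classical in
/-- sup of `g` over elements strictly below `i`. -/
noncomputable def Msup (g : Fin n → ℕ) (i : Fin n) : ℕ :=
  (Finset.univ.filter (fun j => r j i ∧ j ≠ i)).sup g

/-- transfer map from lattice points to partitions. -/
noncomputable def Phi (x : Fin n → ℤ) (i : Fin n) : ℤ :=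
  if 0 ≤ x i then (Fx r x i : ℤ) else -(Fx r x i : ℤ)

/-- sup of `|f|` strictly below `i`. -/
noncomputable def Mf (f : Fin n → ℤ) (i : Fin n) : ℕ :=
  Msup r (fun j => (f j).natAbs) i

/-- transfer map from partitions to lattice points. -/
noncomputable def Psi (f : Fin n → ℤ) (i : Fin n) : ℤ :=
  if 0 ≤ f i then ((f i).natAbs : ℤ) - (Mf r f i : ℤ)
  else -(((f i).natAbs : ℤ) - (Mf r f i : ℤ))

variable {r}

lemma abs_Phi (x : Fin n → ℤ) (i : Fin n) : |Phi r x i| = (Fx r x i : ℤ) := by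
  rw [Phi]
  split
  · exact abs_of_nonneg (by positivity)
  · rw [abs_neg]; exact abs_of_nonneg (by positivity)

open scoped Classical

lemma mem_chainsTo {i : Fin n} {C : Finset (Fin n)} :
    C ∈ chainsTo r i ↔ i ∈ C ∧ (∀ j ∈ C, r j i) ∧ IsCh r C := by
  simp [chainsTo]

variable (hr : IsPartialOrder (Fin n) r)
include hr

lemma singleton_mem_chainsTo (i : Fin n) : {i} ∈ chainsTo r i := by
  refine mem_chainsTo.2 ⟨mem_singleton_self i, ?_, ?_⟩
  · intro j hj; rw [mem_singleton] at hj; subst hj; exact hr.refl j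
  · intro a ha b hb; rw [mem_singleton] at ha hb; subst ha; subst hb
    exact Or.inl (hr.refl b)

lemma chainsTo_nonempty (i : Fin n) : (chainsTo r i).Nonempty :=
  ⟨{i}, singleton_mem_chainsTo hr i⟩

lemma natAbs_le_Fx (x : Fin n → ℤ) (i : Fin n) : (x i).natAbs ≤ Fx r x i := by
  have := Finset.le_sup (f := fun C => ∑ j ∈ C, (x j).natAbs)
    (singleton_mem_chainsTo hr i)
  simpa [Fx] using this

omit hr in
lemma Fx_le {x : Fin n → ℤ} {m : ℕ} (hx : ChainCond r m x) (i : Fin n) :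
    Fx r x i ≤ m := by
  refine Finset.sup_le fun C hC => ?_
  obtain ⟨-, -, hch⟩ := mem_chainsTo.1 hC
  have := hx C hch
  have hcast : ((∑ j ∈ C, (x j).natAbs : ℕ) : ℤ) = ∑ j ∈ C, |x j| := by
    push_cast [Int.natCast_natAbs]; rfl
  exact_mod_cast hcast ▸ this

lemma Fx_add_le {x : Fin n → ℤ} {j i : Fin n} (hji : r j i) (hne : j ≠ i) :
    Fx r x j + (x i).natAbs ≤ Fx r x i := by
  obtain ⟨C, hC, hCeq⟩ := Finset.exists_mem_eq_sup _ (chainsTo_nonempty hr j)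
    (fun C => ∑ k ∈ C, (x k).natAbs)
  obtain ⟨hjC, hCle, hch⟩ := mem_chainsTo.1 hC
  have hiC : i ∉ C := by
    intro hiC
    exact hne (hr.antisymm j i hji (hCle i hiC))
  have hmem : insert i C ∈ chainsTo r i := by
    refine mem_chainsTo.2 ⟨mem_insert_self i C, ?_, ?_⟩
    · intro k hk
      rcases mem_insert.1 hk with h | h
      · subst h; exact hr.refl _
      · exact hr.trans k j i (hCle k h) hji
    · intro a ha b hb
      rcases mem_insert.1 ha with h | h <;> rcases mem_insert.1 hb with h' | h'
      · subst h; subst h'; exact Or.inl (hr.refl b)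
      · subst h; exact Or.inr (hr.trans b j a (hCle b h') hji)
      · subst h'; exact Or.inl (hr.trans a j b (hCle a h) hji)
      · exact hch a h b h'
  calc Fx r x j + (x i).natAbs = ∑ k ∈ insert i C, (x k).natAbs := by
        rw [Fx, hCeq, Finset.sum_insert hiC, Nat.add_comm]
    _ ≤ Fx r x i := Finset.le_sup (f := fun C => ∑ k ∈ C, (x k).natAbs) hmem

omit hr in
lemma Fx_le_Msup {x : Fin n → ℤ} {j i : Fin n} (hji : r j i) (hne : j ≠ i) :
    Fx r x j ≤ Msup r (Fx r x) i := by
  exact Finset.le_sup (by simp [hji, hne])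


omit hr in
lemma hull_chain_bound {v : Fin n → ℝ} (hv : v ∈ enrichedChainPolytope r)
    {C : Finset (Fin n)} (hC : IsCh r C) : ∑ i ∈ C, |v i| ≤ 1 := by
  have hsub : enrichedChainPolytope r ⊆
      {y : Fin n → ℝ | ∀ D : Finset (Fin n), IsCh r D → ∑ i ∈ D, |y i| ≤ 1} := by
    refine convexHull_min ?_ ?_
    · rintro w ⟨hw1, hw2⟩ D hD
      have hval : ∀ i, |w i| = if w i ≠ 0 then (1:ℝ) else 0 := by
        intro i
        rcases hw1 i with h | h | h <;> simp [h]
      rw [Finset.sum_congr rfl fun i _ => hval i, Finset.sum_boole]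
      have hcard : (D.filter (fun i => w i ≠ 0)).card ≤ 1 := by
        refine Finset.card_le_one.2 fun a ha b hb => ?_
        obtain ⟨haD, haw⟩ := Finset.mem_filter.1 ha
        obtain ⟨hbD, hbw⟩ := Finset.mem_filter.1 hb
        by_contra hab
        rcases hD a haD b hbD with h | h
        · exact (hw2 a haw b hbw hab).1 h
        · exact (hw2 a haw b hbw hab).2 h
      exact_mod_cast hcard
    · intro y hy z hz a b ha hb hab D hD
      calc ∑ i ∈ D, |a • y i + b • z i| ≤ ∑ i ∈ D, (a * |y i| + b * |z i|) := by
            refine Finset.sum_le_sum fun i _ => ?_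
            calc |a • y i + b • z i| ≤ |a • y i| + |b • z i| := abs_add_le _ _
              _ = a * |y i| + b * |z i| := by
                  simp [smul_eq_mul, abs_mul, abs_of_nonneg ha, abs_of_nonneg hb]
        _ = a * (∑ i ∈ D, |y i|) + b * (∑ i ∈ D, |z i|) := by
            rw [Finset.sum_add_distrib, Finset.mul_sum, Finset.mul_sum]
        _ ≤ a * 1 + b * 1 := by
            gcongr
            exacts [hy D hD, hz D hD]
        _ = 1 := by rw [mul_one, mul_one, hab]
  exact hsub hv C hC

open Pointwise in
omit hr in
lemma chainCond_of_mem {x : Fin n → ℤ} {m : ℕ}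
    (hx : (fun i => (x i : ℝ)) ∈ (m : ℝ) • enrichedChainPolytope r) :
    ChainCond r m x := by
  intro C hC
  obtain ⟨y, hy, hxy⟩ := Set.mem_smul_set.1 hx
  have h1 : ∑ i ∈ C, |y i| ≤ 1 := hull_chain_bound hy hC
  have h2 : ∑ i ∈ C, |(x i : ℝ)| ≤ (m : ℝ) := by
    calc ∑ i ∈ C, |(x i : ℝ)| = ∑ i ∈ C, (m : ℝ) * |y i| := by
          refine Finset.sum_congr rfl fun i _ => ?_
          have : (x i : ℝ) = (m : ℝ) * y i := by
            have := congrFun hxy i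
            simpa [smul_eq_mul] using this.symm
          rw [this, abs_mul, abs_of_nonneg (by positivity : (0:ℝ) ≤ (m:ℝ))]
      _ = (m : ℝ) * ∑ i ∈ C, |y i| := (Finset.mul_sum _ _ _).symm
      _ ≤ (m : ℝ) * 1 := by gcongr
      _ = (m : ℝ) := mul_one _
  exact_mod_cast (by push_cast; exact h2 : ((∑ i ∈ C, |x i| : ℤ) : ℝ) ≤ ((m:ℕ) : ℝ))

variable (hnat : ∀ i j, r i j → i ≤ j)
include hnat

lemma Fx_eq (x : Fin n → ℤ) (i : Fin n) :
    Fx r x i = (x i).natAbs + Msup r (Fx r x) i := by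
  refine le_antisymm ?_ ?_
  · refine Finset.sup_le fun C hC => ?_
    obtain ⟨hiC, hCle, hch⟩ := mem_chainsTo.1 hC
    rw [← Finset.add_sum_erase C _ hiC]
    rcases (C.erase i).eq_empty_or_nonempty with he | hne
    · rw [he]; simp
    · refine Nat.add_le_add_left ?_ _
      set t := (C.erase i).max' hne with ht
      have htC : t ∈ C.erase i := Finset.max'_mem _ hne
      have htC' : t ∈ C := (Finset.mem_erase.1 htC).2
      have htne : t ≠ i := (Finset.mem_erase.1 htC).1
      have hmem : C.erase i ∈ chainsTo r t := by
        refine mem_chainsTo.2 ⟨htC, ?_, ?_⟩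
        · intro k hk
          have hkC : k ∈ C := (Finset.mem_erase.1 hk).2
          rcases hch k hkC t htC' with h | h
          · exact h
          · have : t = k := le_antisymm (hnat t k h) (Finset.le_max' _ k hk)
            subst this; exact hr.refl t
        · intro a ha b hb
          exact hch a (Finset.mem_erase.1 ha).2 b (Finset.mem_erase.1 hb).2
      calc ∑ k ∈ C.erase i, (x k).natAbs ≤ Fx r x t :=
            Finset.le_sup (f := fun C => ∑ k ∈ C, (x k).natAbs) hmem
        _ ≤ Msup r (Fx r x) i := Fx_le_Msup (hCle t htC') htne
  · rcases (Finset.univ.filter (fun j => r j i ∧ j ≠ i)).eq_empty_or_nonempty with he | hne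
    · rw [Msup, he]; simpa using natAbs_le_Fx hr x i
    · obtain ⟨j, hj, hjeq⟩ := Finset.exists_mem_eq_sup _ hne (Fx r x)
      rw [Msup, hjeq]
      obtain ⟨hji, hjne⟩ : r j i ∧ j ≠ i := by simpa using hj
      rw [Nat.add_comm]
      exact Fx_add_le hr hji hjne


open Pointwise in
lemma mem_of_chainCond {x : Fin n → ℤ} {m : ℕ} (hm : 0 < m) (hx : ChainCond r m x) :
    (fun i => (x i : ℝ)) ∈ (m : ℝ) • enrichedChainPolytope r := by
  classical
  set s : Fin n → ℝ := fun i => if 0 ≤ x i then 1 else -1 with hs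
  set vk : ℕ → Fin n → ℝ := fun k i =>
    if Msup r (Fx r x) i < k ∧ k ≤ Fx r x i then s i else 0 with hvk
  have hvmem : ∀ k, vk k ∈ signedAntichainVectors r := by
    intro k
    constructor
    · intro i
      by_cases h : Msup r (Fx r x) i < k ∧ k ≤ Fx r x i
      · by_cases h0 : 0 ≤ x i
        · right; left; simp [hvk, h, hs, h0]
        · right; right; simp [hvk, h, hs, h0]
      · left; simp [hvk, h]
    · intro i hi j hj hij
      have hi' : Msup r (Fx r x) i < k ∧ k ≤ Fx r x i := by
        by_contra h
        exact hi (by simp [hvk, h])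
      have hj' : Msup r (Fx r x) j < k ∧ k ≤ Fx r x j := by
        by_contra h
        exact hj (by simp [hvk, h])
      constructor
      · intro hrij
        have := Fx_le_Msup (x := x) hrij hij
        omega
      · intro hrji
        have := Fx_le_Msup (x := x) hrji (Ne.symm hij)
        omega
  have hsum : ∀ i, ∑ k ∈ Finset.Icc 1 m, vk k i = (x i : ℝ) := by
    intro i
    have hF : Fx r x i ≤ m := Fx_le hx i
    have hFM : Fx r x i = (x i).natAbs + Msup r (Fx r x) i := Fx_eq hr hnat x i
    have hfilter : (Finset.Icc 1 m).filter
        (fun k => Msup r (Fx r x) i < k ∧ k ≤ Fx r x i)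
        = Finset.Icc (Msup r (Fx r x) i + 1) (Fx r x i) := by
      ext k
      simp only [Finset.mem_filter, Finset.mem_Icc]
      omega
    calc ∑ k ∈ Finset.Icc 1 m, vk k i
        = ∑ k ∈ (Finset.Icc 1 m).filter
            (fun k => Msup r (Fx r x) i < k ∧ k ≤ Fx r x i), s i := by
          simp only [hvk]
          rw [← Finset.sum_filter]
      _ = ((x i).natAbs : ℝ) * s i := by
          rw [hfilter, Finset.sum_const, Nat.card_Icc]
          have hc : Fx r x i + 1 - (Msup r (Fx r x) i + 1) = (x i).natAbs := by omega
          rw [hc, nsmul_eq_mul]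
      _ = (x i : ℝ) := by
          by_cases h0 : 0 ≤ x i
          · simp only [hs, if_pos h0, mul_one]
            rw [Nat.cast_natAbs]
            exact_mod_cast abs_of_nonneg h0
          · simp only [hs, if_neg h0, mul_neg_one]
            rw [Nat.cast_natAbs]
            have h1 : -|x i| = x i := by
              rw [abs_of_nonpos (le_of_not_ge h0), neg_neg]
            exact_mod_cast h1
  have hm0 : (m : ℝ) ≠ 0 := Nat.cast_ne_zero.2 hm.ne'
  rw [Set.mem_smul_set]
  refine ⟨∑ k ∈ Finset.Icc 1 m, (m : ℝ)⁻¹ • vk k, ?_, ?_⟩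
  · refine (convex_convexHull ℝ _).sum_mem (fun k _ => by positivity) ?_
      (fun k _ => subset_convexHull ℝ _ (hvmem k))
    rw [Finset.sum_const, Nat.card_Icc, nsmul_eq_mul]
    have : (m + 1 - 1 : ℕ) = m := by omega
    rw [this, mul_inv_cancel₀ hm0]
  · rw [Finset.smul_sum]
    rw [Finset.sum_congr rfl fun k _ => smul_inv_smul₀ hm0 (vk k)]
    funext i
    rw [Finset.sum_apply]
    exact hsum i


omit hr hnat in
lemma Mf_le {m : ℕ} {f : Fin n → ℤ} (hf : IsLeftEnrichedPartition r m f) (i : Fin n) :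
    Mf r f i ≤ (f i).natAbs := by
  rw [Mf, Msup]
  refine Finset.sup_le fun j hj => ?_
  obtain ⟨hji, hjne⟩ : r j i ∧ j ≠ i := by simpa using hj
  have := (hf.2 j i hji hjne).1
  rw [Int.abs_eq_natAbs, Int.abs_eq_natAbs] at this
  exact_mod_cast this

omit hr hnat in
lemma abs_Psi {m : ℕ} {f : Fin n → ℤ} (hf : IsLeftEnrichedPartition r m f) (i : Fin n) :
    |Psi r f i| = ((f i).natAbs : ℤ) - (Mf r f i : ℤ) := by
  have hab : (Mf r f i : ℤ) ≤ ((f i).natAbs : ℤ) := by exact_mod_cast Mf_le hf i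
  rw [Psi]
  split
  · exact abs_of_nonneg (by omega)
  · rw [abs_neg]; exact abs_of_nonneg (by omega)

omit hr hnat in
lemma natAbs_Psi {m : ℕ} {f : Fin n → ℤ} (hf : IsLeftEnrichedPartition r m f) (i : Fin n) :
    (Psi r f i).natAbs + Mf r f i = (f i).natAbs := by
  have h1 := abs_Psi hf i
  have h2 : |Psi r f i| = ((Psi r f i).natAbs : ℤ) := Int.abs_eq_natAbs _
  omega

omit hr in
lemma Psi_chainCond {m : ℕ} {f : Fin n → ℤ} (hf : IsLeftEnrichedPartition r m f) :
    ChainCond r m (Psi r f) := by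
  have key : ∀ N : ℕ, ∀ C : Finset (Fin n), C.card ≤ N → IsCh r C →
      ∀ hne : C.Nonempty, ∑ i ∈ C, |Psi r f i| ≤ |f (C.max' hne)| := by
    intro N
    induction N with
    | zero =>
      intro C hcard hch hne
      obtain ⟨a, ha⟩ := hne
      have : 0 < C.card := Finset.card_pos.2 ⟨a, ha⟩
      omega
    | succ N ih =>
      intro C hcard hch hne
      set t := C.max' hne with ht
      have htC : t ∈ C := Finset.max'_mem _ hne
      rw [← Finset.add_sum_erase C _ htC]
      have habs : |Psi r f t| = ((f t).natAbs : ℤ) - (Mf r f t : ℤ) := abs_Psi hf t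
      rcases (C.erase t).eq_empty_or_nonempty with he | hne'
      · rw [he, Finset.sum_empty, add_zero, habs, Int.abs_eq_natAbs]
        omega
      · set t' := (C.erase t).max' hne' with ht'
        have ht'C : t' ∈ C.erase t := Finset.max'_mem _ hne'
        have ht'C' : t' ∈ C := (Finset.mem_erase.1 ht'C).2
        have ht'ne : t' ≠ t := (Finset.mem_erase.1 ht'C).1
        have hrt : r t' t := by
          rcases hch t' ht'C' t htC with h | h
          · exact h
          · exact absurd (le_antisymm (hnat t t' h) (Finset.le_max' _ t' ht'C'))
              (Ne.symm ht'ne)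
        have hch' : IsCh r (C.erase t) := fun a ha b hb =>
          hch a (Finset.mem_erase.1 ha).2 b (Finset.mem_erase.1 hb).2
        have hcard' : (C.erase t).card ≤ N := by
          have := Finset.card_erase_of_mem htC
          omega
        have hsum' := ih (C.erase t) hcard' hch' hne'
        rw [← ht'] at hsum'
        have hMf : ((f t').natAbs : ℕ) ≤ Mf r f t := by
          rw [Mf, Msup]
          refine Finset.le_sup (f := fun j => (f j).natAbs) ?_
          simp [hrt, ht'ne]
        have habs' : |f t'| = ((f t').natAbs : ℤ) := Int.abs_eq_natAbs _
        have habst : |f t| = ((f t).natAbs : ℤ) := Int.abs_eq_natAbs _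
        omega
  intro C hch
  rcases C.eq_empty_or_nonempty with he | hne
  · rw [he, Finset.sum_empty]; positivity
  · calc ∑ i ∈ C, |Psi r f i| ≤ |f (C.max' hne)| := key C.card C le_rfl hch hne
      _ ≤ (m : ℤ) := hf.1 _

lemma Phi_isLEP {m : ℕ} {x : Fin n → ℤ} (hx : ChainCond r m x) :
    IsLeftEnrichedPartition r m (Phi r x) := by
  constructor
  · intro i
    rw [abs_Phi]
    exact_mod_cast Fx_le hx i
  · intro i j hij hne
    have h1 : Fx r x i ≤ Msup r (Fx r x) j := Fx_le_Msup hij hne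
    have h2 : Fx r x j = (x j).natAbs + Msup r (Fx r x) j := Fx_eq hr hnat x j
    constructor
    · rw [abs_Phi, abs_Phi]
      have h3 : Fx r x i ≤ Fx r x j := by omega
      exact_mod_cast h3
    · intro heq
      rw [abs_Phi, abs_Phi] at heq
      have heq' : Fx r x i = Fx r x j := by exact_mod_cast heq
      have hxj : (x j).natAbs = 0 := by omega
      have : 0 ≤ x j := by omega
      rw [Phi, if_pos this]
      positivity

lemma Psi_Phi (x : Fin n → ℤ) : Psi r (Phi r x) = x := by
  funext i
  have hnatAbs : ∀ j, (Phi r x j).natAbs = Fx r x j := by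
    intro j
    have := abs_Phi (r := r) x j
    rw [Int.abs_eq_natAbs] at this
    exact_mod_cast this
  have hMf : Mf r (Phi r x) i = Msup r (Fx r x) i := by
    rw [Mf, Msup, Msup]
    exact Finset.sup_congr rfl fun j _ => hnatAbs j
  have hFeq : Fx r x i = (x i).natAbs + Msup r (Fx r x) i := Fx_eq hr hnat x i
  by_cases h0 : 0 ≤ x i
  · have hphi : 0 ≤ Phi r x i := by rw [Phi, if_pos h0]; positivity
    rw [Psi, if_pos hphi, hMf, hnatAbs]
    omega
  · have hpos : 0 < Fx r x i := by
      have := natAbs_le_Fx hr x i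
      omega
    have hphi : ¬ 0 ≤ Phi r x i := by
      rw [Phi, if_neg h0]
      omega
    rw [Psi, if_neg hphi, hMf, hnatAbs]
    omega

lemma Fx_Psi {m : ℕ} {f : Fin n → ℤ} (hf : IsLeftEnrichedPartition r m f) (i : Fin n) :
    Fx r (Psi r f) i = (f i).natAbs := by
  suffices key : ∀ N : ℕ, ∀ i : Fin n, i.val < N → Fx r (Psi r f) i = (f i).natAbs by
    exact key n i i.2
  intro N
  induction N with
  | zero => omega
  | succ N ih =>
    intro i hi
    have hM : Msup r (Fx r (Psi r f)) i = Mf r f i := by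
      refine Finset.sup_congr rfl fun j hj => ?_
      obtain ⟨hji, hjne⟩ : r j i ∧ j ≠ i := by simpa using hj
      have hjlt : j.val < i.val := lt_of_le_of_ne (hnat j i hji) (fun h => hjne (Fin.ext h))
      exact ih j (by omega)
    rw [Fx_eq hr hnat, hM]
    have := natAbs_Psi hf i
    omega

lemma Phi_Psi {m : ℕ} {f : Fin n → ℤ} (hf : IsLeftEnrichedPartition r m f) :
    Phi r (Psi r f) = f := by
  funext i
  have hF : Fx r (Psi r f) i = (f i).natAbs := Fx_Psi hr hnat hf i
  have hab : Mf r f i ≤ (f i).natAbs := Mf_le hf i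
  rcases lt_trichotomy (f i) 0 with hneg | hzero | hpos
  · have hstrict : Mf r f i < (f i).natAbs := by
      rcases eq_or_lt_of_le hab with heq | h
      · exfalso
        have hne0 : (f i).natAbs ≠ 0 := by omega
        have hMpos : 0 < Mf r f i := by omega
        have hnonempty : (Finset.univ.filter (fun j => r j i ∧ j ≠ i)).Nonempty := by
          by_contra h
          rw [Finset.not_nonempty_iff_eq_empty] at h
          have : Mf r f i = 0 := by rw [Mf, Msup, h]; rfl
          omega
        obtain ⟨j, hj, hjeq⟩ := Finset.exists_mem_eq_sup _ hnonempty
          (fun j => (f j).natAbs)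
        obtain ⟨hji, hjne⟩ : r j i ∧ j ≠ i := by simpa using hj
        have h3 : Mf r f i = (f j).natAbs := hjeq
        have hj1 : (f j).natAbs = (f i).natAbs := by omega
        have habs : |f j| = |f i| := by
          rw [Int.abs_eq_natAbs, Int.abs_eq_natAbs, hj1]
        have := (hf.2 j i hji hjne).2 habs
        omega
      · exact h
    have hneg' : ¬ 0 ≤ Psi r f i := by
      rw [Psi, if_neg (by omega)]
      omega
    rw [Phi, if_neg hneg', hF]
    omega
  · have h0 : 0 ≤ Psi r f i := by rw [Psi, if_pos (by omega)]; omega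
    rw [Phi, if_pos h0, hF]
    omega
  · have h0 : 0 ≤ Psi r f i := by rw [Psi, if_pos (by omega)]; omega
    rw [Phi, if_pos h0, hF]
    omega

end Aux

/-- The Ehrhart polynomial of the enriched chain polytope equals the left enriched
order polynomial: `|m E_P ∩ ℤ^n| = Ω_P^{(ℓ)}(m)`. -/
theorem enrichedChainPolytope_ehrhart {n : ℕ} (r : Fin n → Fin n → Prop)
    (hr : IsPartialOrder (Fin n) r) (hnat : ∀ i j, r i j → i ≤ j)
    (m : ℕ) (hm : 0 < m) :
    eCount r m = leCount r m := by
  rw [eCount, leCount]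
  refine Nat.card_congr (Equiv.trans (Equiv.subtypeEquivRight fun x =>
    ⟨fun h => chainCond_of_mem h, fun h => mem_of_chainCond hr hnat hm h⟩) ?_)
  exact
    { toFun := fun x => ⟨Phi r x.1, Phi_isLEP hr hnat x.2⟩
      invFun := fun f => ⟨Psi r f.1, Psi_chainCond hnat f.2⟩
      left_inv := fun x => Subtype.ext (Psi_Phi hr hnat x.1)
      right_inv := fun f => Subtype.ext (Phi_Psi hr hnat f.2) }
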